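/- Under the ABC token-bucket marking algorithm with per-packet accelerate fraction values f_k ∈ [0,1], token cap tokenLimit ≥ 1, and initial token 0, the total number of packets marked accelerate among the first n packets is at most ⌊∑_{k=1}^{n} f_k⌋ + 1; in particular if f_k = f for all k, at most ⌊n·f⌋ + 1 packets are marked accelerate. -/
import Mathlib


/-- Token-bucket marking: `token 0 = 0`; on packet `k` the token is updated to
`min (token k + f k) L` and, if the packet is marked accelerate, this updated
value exceeds 1 and is decremented by 1.  Then at most `⌊∑ f k⌋ + 1` of the
first `n` packets are marked accelerate; in particular if `f k = c` for all `k`,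
at most `⌊n*c⌋ + 1` packets are marked accelerate. -/
theorem abc_token_bucket (f : ℕ → ℝ) (L : ℝ) (token : ℕ → ℝ) (mark : ℕ → Bool)
    (hf : ∀ k, 0 ≤ f k ∧ f k ≤ 1) (hL : 1 ≤ L)
    (h0 : token 0 = 0)
    (hacc : ∀ k, mark k = true →
      1 < min (token k + f k) L ∧ token (k + 1) = min (token k + f k) L - 1)
    (hbr : ∀ k, mark k = false → token (k + 1) = min (token k + f k) L) :
    ∀ n : ℕ,
      (((Finset.range n).filter (fun k => mark k = true)).card : ℤ) ≤
        ⌊∑ k ∈ Finset.range n, f k⌋ + 1 ∧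
      ((∀ k, f k = f 0) →
        (((Finset.range n).filter (fun k => mark k = true)).card : ℤ) ≤
          ⌊(n : ℝ) * f 0⌋ + 1) := by
  have key : ∀ n : ℕ, 0 ≤ token n ∧
      token n + (((Finset.range n).filter (fun k => mark k = true)).card : ℝ) ≤
        ∑ k ∈ Finset.range n, f k := by
    intro n
    induction n with
    | zero => simp [h0]
    | succ n ih =>
      obtain ⟨h1, h2⟩ := ih
      have hfn := hf n
      have hsum : ∑ k ∈ Finset.range (n+1), f k = (∑ k ∈ Finset.range n, f k) + f n :=
        Finset.sum_range_succ _ _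
      have hmin0 : 0 ≤ min (token n + f n) L := le_min (by linarith [hfn.1]) (by linarith)
      have hminle : min (token n + f n) L ≤ token n + f n := min_le_left _ _
      cases hm : mark n with
      | true =>
        obtain ⟨hgt, ht⟩ := hacc n hm
        have hcard : (Finset.range (n+1)).filter (fun k => mark k = true) =
            insert n ((Finset.range n).filter (fun k => mark k = true)) := by
          rw [Finset.range_add_one, Finset.filter_insert, if_pos hm]
        have hnotmem : n ∉ (Finset.range n).filter (fun k => mark k = true) := by
          simp
        rw [hcard, Finset.card_insert_of_notMem hnotmem]
        constructor
        · rw [ht]; linarith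
        · rw [ht, hsum]
          push_cast
          linarith
      | false =>
        have ht := hbr n hm
        have hcard : (Finset.range (n+1)).filter (fun k => mark k = true) =
            (Finset.range n).filter (fun k => mark k = true) := by
          rw [Finset.range_add_one, Finset.filter_insert, if_neg (by simp [hm])]
        rw [hcard]
        constructor
        · rw [ht]; exact hmin0
        · rw [ht, hsum]; linarith
  intro n
  obtain ⟨h1, h2⟩ := key n
  have hle : (((Finset.range n).filter (fun k => mark k = true)).card : ℝ) ≤
      ∑ k ∈ Finset.range n, f k := by linarith
  have hfl : (((Finset.range n).filter (fun k => mark k = true)).card : ℤ) ≤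
      ⌊∑ k ∈ Finset.range n, f k⌋ := by
    rw [Int.le_floor]; exact_mod_cast hle
  constructor
  · omega
  · intro hc
    have : ∑ k ∈ Finset.range n, f k = (n : ℝ) * f 0 := by
      rw [Finset.sum_congr rfl (fun k _ => hc k), Finset.sum_const, Finset.card_range,
        nsmul_eq_mul]
    rw [this] at hfl
    omega
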